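/- Let ν be an isotropic measure on S^{n-1} and t : S^{n-1} → (0,∞) continuous. Then det ∫_{S^{n-1}} t(v) v⊗v dν(v) ≥ exp(∫_{S^{n-1}} log t(v) dν(v)), with equality if and only if t(v_1)⋯t(v_n) is constant over all linearly independent n-tuples v_1,...,v_n ∈ supp(ν). -/

import Mathlib

open MeasureTheory

noncomputable section BBAux

variable {α : Type*} [MeasurableSpace α]

/-- Fubini for finite products over `Fin n` with a general sigma-finite measure. -/
theorem bb_integral_pi_prod (ν : Measure α) [SigmaFinite ν] :
    ∀ (n : ℕ) (f : Fin n → α → ℝ),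
      ∫ u, ∏ i, f i (u i) ∂(Measure.pi fun _ : Fin n => ν) = ∏ i, ∫ x, f i x ∂ν := by
  intro n
  induction n with
  | zero =>
      intro f
      rw [Measure.pi_of_empty (fun _ : Fin 0 => ν)]
      simp
  | succ m ih =>
      intro f
      calc
        ∫ u, ∏ i, f i (u i) ∂(Measure.pi fun _ : Fin (m + 1) => ν)
            = ∫ x : α × (Fin m → α),
              f 0 x.1 * ∏ i : Fin m, f (Fin.succ i) (x.2 i)
              ∂(ν.prod (Measure.pi fun _ : Fin m => ν)) := by
          rw [← ((measurePreserving_piFinSuccAbove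
            (fun _ : Fin (m + 1) => ν) 0).symm).integral_comp']
          refine integral_congr_ae (Filter.Eventually.of_forall fun x => ?_)
          simp only [MeasurableEquiv.piFinSuccAbove_symm_apply, Fin.insertNthEquiv,
            Equiv.coe_fn_mk, Fin.insertNth_zero, Fin.prod_univ_succ, Fin.cons_succ,
            Fin.cons_zero, cast_eq]
        _ = (∫ x, f 0 x ∂ν) * ∏ i : Fin m, ∫ x, f (Fin.succ i) x ∂ν := by
          rw [← ih, ← integral_prod_mul]
        _ = ∏ i, ∫ x, f i x ∂ν := by rw [Fin.prod_univ_succ]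

/-- Permutation invariance of the n-fold product of a single measure. -/
theorem bb_integral_pi_perm (ν : Measure α) [SigmaFinite ν] {n : ℕ}
    (σ : Equiv.Perm (Fin n)) (F : (Fin n → α) → ℝ) :
    ∫ u, F (u ∘ σ) ∂(Measure.pi fun _ : Fin n => ν)
      = ∫ u, F u ∂(Measure.pi fun _ : Fin n => ν) := by
  have hmp := measurePreserving_piCongrLeft (fun _ : Fin n => ν) σ.symm
  have := hmp.integral_comp' (f := MeasurableEquiv.piCongrLeft (fun _ => α) σ.symm) F
  rw [← this]
  refine integral_congr_ae (Filter.Eventually.of_forall fun u => ?_)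
  show F (u ∘ σ) = F ((MeasurableEquiv.piCongrLeft (fun _ => α) σ.symm) u)
  congr 1
  funext i
  show u (σ i) = _
  rw [MeasurableEquiv.coe_piCongrLeft, Equiv.piCongrLeft_apply_eq_cast]
  simp

end BBAux

section BB2

open MeasureTheory

variable {n : ℕ} (ν : Measure (EuclideanSpace ℝ (Fin n))) [IsFiniteMeasure ν]

local notation "E'" => EuclideanSpace ℝ (Fin n)

/-- a.e. every coordinate lands in a conull set. -/
theorem bb_ae_pi_mem {S : Set E'} (hS : MeasurableSet S) (hnull : ν Sᶜ = 0) :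
    ∀ᵐ u ∂(Measure.pi fun _ : Fin n => ν), ∀ i, u i ∈ S := by
  rw [MeasureTheory.ae_all_iff]
  intro i
  have : {u : Fin n → E' | ¬ u i ∈ S} =
      Set.univ.pi (Function.update (fun _ : Fin n => (Set.univ : Set E')) i Sᶜ) := by
    ext u
    simp only [Set.mem_setOf_eq, Set.mem_pi, Set.mem_univ, forall_true_left]
    constructor
    · intro h j
      rcases eq_or_ne j i with rfl | hj
      · simpa [Function.update_self] using h
      · simp [Function.update_of_ne hj]
    · intro h
      have := h i
      simpa [Function.update_self] using this
  rw [ae_iff]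
  show (Measure.pi fun _ : Fin n => ν) {u | ¬ u i ∈ S} = 0
  rw [this, Measure.pi_pi]
  exact Finset.prod_eq_zero (Finset.mem_univ i) (by simp [hnull])

theorem bb_ae_sphere (hsph : ν (Metric.sphere (0 : E') 1)ᶜ = 0) :
    ∀ᵐ v ∂ν, ‖v‖ = 1 := by
  rw [ae_iff]
  refine measure_mono_null (fun v hv => ?_) hsph
  simp only [Set.mem_setOf_eq] at hv
  simp only [Set.mem_compl_iff, Metric.mem_sphere, dist_zero_right]
  exact hv

/-- Continuous functions are integrable w.r.t. a finite measure on the sphere. -/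
theorem bb_integrable (hsph : ν (Metric.sphere (0 : E') 1)ᶜ = 0)
    {f : E' → ℝ} (hf : Continuous f) : Integrable f ν := by
  obtain ⟨C, hC⟩ := (isCompact_sphere (0 : E') 1).exists_bound_of_continuousOn
    hf.continuousOn
  refine ⟨hf.aestronglyMeasurable, HasFiniteIntegral.of_bounded (C := C) ?_⟩
  filter_upwards [bb_ae_sphere ν hsph] with v hv
  exact hC v (by simpa [Metric.mem_sphere, dist_zero_right] using hv)

/-- Continuous functions on the product are integrable w.r.t. the product measure. -/
theorem bb_integrable_pi (hsph : ν (Metric.sphere (0 : E') 1)ᶜ = 0)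
    {F : (Fin n → E') → ℝ} (hF : Continuous F) :
    Integrable F (Measure.pi fun _ : Fin n => ν) := by
  have hcomp : IsCompact (Set.univ.pi fun _ : Fin n => Metric.sphere (0 : E') 1) :=
    isCompact_univ_pi fun _ => isCompact_sphere 0 1
  obtain ⟨C, hC⟩ := hcomp.exists_bound_of_continuousOn hF.continuousOn
  haveI : IsFiniteMeasure (Measure.pi fun _ : Fin n => ν) := by
    constructor
    rw [← Set.pi_univ Set.univ, Measure.pi_pi]
    exact ENNReal.prod_lt_top fun i _ => measure_lt_top ν _
  refine ⟨hF.aestronglyMeasurable, HasFiniteIntegral.of_bounded (C := C) ?_⟩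
  filter_upwards [bb_ae_pi_mem ν Metric.isClosed_sphere.measurableSet hsph] with u hu
  exact hC u (by intro i _; simpa [Metric.mem_sphere, dist_zero_right] using hu i)

/-- Moment identity from isotropy. -/
theorem bb_moment (hsph : ν (Metric.sphere (0 : E') 1)ᶜ = 0)
    (hiso : ∀ x : E', ∫ v, (inner ℝ x v : ℝ) ^ 2 ∂ν = ‖x‖ ^ 2) (i j : Fin n) :
    ∫ v, v i * v j ∂ν = if i = j then 1 else 0 := by
  have hint : ∀ k l : Fin n, Integrable (fun v : E' => v k * v l) ν := fun k l =>
    bb_integrable ν hsph (((EuclideanSpace.proj k).continuous).mul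
      ((EuclideanSpace.proj l).continuous))
  have key : ∀ x : E', ∫ v, (∑ k, x k * v k) ^ 2 ∂ν = ‖x‖ ^ 2 := by
    intro x
    rw [← hiso x]
    refine integral_congr_ae (Filter.Eventually.of_forall fun v => ?_)
    show (∑ k, x k * v k) ^ 2 = (inner ℝ x v : ℝ) ^ 2
    have hxv : (inner ℝ x v : ℝ) = ∑ k, x k * v k := by
      rw [PiLp.inner_apply]
      simp [RCLike.inner_apply]
      exact Finset.sum_congr rfl fun k _ => mul_comm _ _
    rw [hxv]
  have sq : ∀ k : Fin n, ∫ v, v k * v k ∂ν = 1 := by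
    intro k
    have := key (EuclideanSpace.single k 1)
    rw [EuclideanSpace.norm_single] at this
    simp only [EuclideanSpace.single_apply] at this
    have h2 : ∀ v : E', (∑ l, (if l = k then (1:ℝ) else 0) * v l) ^ 2 = v k * v k := by
      intro v
      rw [Finset.sum_eq_single k (fun l _ hl => by simp [hl]) (by simp)]
      simp [sq]
    simp only [h2] at this
    simpa using this
  rcases eq_or_ne i j with rfl | hij
  · simpa using sq i
  · simp only [hij, if_false]
    have := key (EuclideanSpace.single i 1 + EuclideanSpace.single j 1)
    have hx : ∀ k, (EuclideanSpace.single i (1:ℝ) + EuclideanSpace.single j 1 : E') k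
        = (if k = i then (1:ℝ) else 0) + (if k = j then 1 else 0) := by
      intro k
      rw [PiLp.add_apply]
      simp [EuclideanSpace.single_apply]
    have hsum : ∀ v : E',
        (∑ k, ((EuclideanSpace.single i (1:ℝ) + EuclideanSpace.single j 1 : E') k) * v k) ^ 2
          = v i * v i + (2 * (v i * v j) + v j * v j) := by
      intro v
      have : (∑ k, ((EuclideanSpace.single i (1:ℝ) + EuclideanSpace.single j 1 : E') k) * v k)
          = v i + v j := by
        simp only [hx, add_mul]
        rw [Finset.sum_add_distrib]
        congr 1
        · rw [Finset.sum_eq_single i (fun l _ hl => by simp [hl]) (by simp)]; simp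
        · rw [Finset.sum_eq_single j (fun l _ hl => by simp [hl]) (by simp)]; simp
      rw [this]; ring
    have hnorm : ‖EuclideanSpace.single i (1:ℝ) + EuclideanSpace.single j 1‖ ^ 2 = 2 := by
      rw [EuclideanSpace.norm_eq]
      rw [Real.sq_sqrt (by positivity)]
      have : ∀ k, ‖(EuclideanSpace.single i (1:ℝ) + EuclideanSpace.single j 1 : E') k‖ ^ 2
          = (if k = i then (1:ℝ) else 0) + (if k = j then 1 else 0) := by
        intro k
        rw [hx k]
        rcases eq_or_ne k i with rfl | hki
        · simp [(hij.symm : ¬ (j = k)) ∘ Eq.symm]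
          rcases eq_or_ne k j with rfl | hkj
          · exact absurd rfl hij
          · simp [hkj]
        · rcases eq_or_ne k j with rfl | hkj
          · simp [hki]
          · simp [hki, hkj]
      rw [Finset.sum_congr rfl fun k _ => this k, Finset.sum_add_distrib]
      have e1 : ∑ k : Fin n, (if k = i then (1:ℝ) else 0) = 1 := by simp
      have e2 : ∑ k : Fin n, (if k = j then (1:ℝ) else 0) = 1 := by simp
      rw [e1, e2]; norm_num
    rw [hnorm] at this
    rw [integral_congr_ae (Filter.Eventually.of_forall hsum)] at this
    have hII : ∫ v, (v i * v i + (2 * (v i * v j) + v j * v j)) ∂ν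
        = (∫ v, v i * v i ∂ν) + ((∫ v, 2 * (v i * v j) ∂ν) + ∫ v, v j * v j ∂ν) := by
      have h2 : Integrable (fun v : E' => 2 * (v i * v j) + v j * v j) ν :=
        ((hint i j).const_mul 2).add (hint j j)
      rw [integral_add (hint i i) h2]
      congr 1
      exact integral_add ((hint i j).const_mul 2) (hint j j)
    rw [hII, integral_const_mul, sq i, sq j] at this
    linarith

end BB2
noncomputable section BB3

open MeasureTheory

/-- Determinant of the matrix with rows `u i`. -/
def bbD {n : ℕ} (u : Fin n → EuclideanSpace ℝ (Fin n)) : ℝ :=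
  (Matrix.of fun i j : Fin n => u i j).det

theorem bbD_expand {n : ℕ} (u : Fin n → EuclideanSpace ℝ (Fin n)) :
    bbD u = ∑ σ : Equiv.Perm (Fin n),
      ((Equiv.Perm.sign σ : ℤ) : ℝ) * ∏ i, u i (σ i) := by
  rw [bbD, ← Matrix.det_transpose, Matrix.det_apply']
  rfl

theorem bbD_continuous {n : ℕ} : Continuous (bbD (n := n)) := by
  apply Continuous.matrix_det
  apply continuous_matrix
  intro i j
  exact (EuclideanSpace.proj j).continuous.comp (continuous_apply i)

theorem bbD_ne_zero_iff {n : ℕ} (u : Fin n → EuclideanSpace ℝ (Fin n)) :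
    bbD u ≠ 0 ↔ LinearIndependent ℝ u := by
  set A : Matrix (Fin n) (Fin n) ℝ := Matrix.of fun i j : Fin n => u i j with hA
  have h1 : (LinearIndependent ℝ fun i => A i) ↔ IsUnit A :=
    Matrix.linearIndependent_rows_iff_isUnit
  have h2 : IsUnit A ↔ A.det ≠ 0 := by
    rw [Matrix.isUnit_iff_isUnit_det, isUnit_iff_ne_zero]
  rw [bbD, ← h2, ← h1]
  have key : (fun i => A i) = ⇑(WithLp.linearEquiv 2 ℝ (Fin n → ℝ)) ∘ u := rfl
  rw [key]
  exact (LinearMap.linearIndependent_iff_of_injOn (v := u)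
    (WithLp.linearEquiv 2 ℝ (Fin n → ℝ)).toLinearMap (WithLp.linearEquiv 2 ℝ (Fin n → ℝ)).injective.injOn)

theorem bb_perm_eq_of_agree {n : ℕ} {k : Fin n} {σ τ : Equiv.Perm (Fin n)}
    (h : ∀ j, j ≠ k → σ j = τ j) : σ = τ := by
  have hk : σ k = τ k := by
    by_contra hne
    have hm : τ⁻¹ (σ k) ≠ k := by
      intro he
      apply hne
      have h2 : τ (τ⁻¹ (σ k)) = τ k := congrArg τ he
      rwa [Equiv.Perm.inv_def, Equiv.apply_symm_apply] at h2
    have h1 := h _ hm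
    rw [Equiv.Perm.inv_def, Equiv.apply_symm_apply] at h1
    exact hm (σ.injective h1)
  ext j
  rcases eq_or_ne j k with rfl | hj
  · exact congrArg Fin.val hk
  · exact congrArg Fin.val (h j hj)

variable {n : ℕ} (ν : Measure (EuclideanSpace ℝ (Fin n))) [IsFiniteMeasure ν]

local notation "E'" => EuclideanSpace ℝ (Fin n)
local notation "μⁿ" => (Measure.pi fun _ : Fin n => ν)

theorem bb_det_formula (hsph : ν (Metric.sphere (0 : E') 1)ᶜ = 0)
    {f : E' → ℝ} (hf : Continuous f) :
    (Matrix.of fun i j : Fin n => ∫ v, f v * (v i * v j) ∂ν).det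
      = (n.factorial : ℝ)⁻¹ * ∫ u, (∏ i, f (u i)) * (bbD u) ^ 2 ∂μⁿ := by
  classical
  set s : Equiv.Perm (Fin n) → ℝ := fun σ => ((Equiv.Perm.sign σ : ℤ) : ℝ) with hs
  have hs_mul : ∀ σ τ : Equiv.Perm (Fin n), s (σ * τ) = s σ * s τ := by
    intro σ τ; simp [hs]
  have hs_inv : ∀ σ : Equiv.Perm (Fin n), s σ⁻¹ = s σ := by
    intro σ; simp [hs]
  have hs_sq : ∀ σ : Equiv.Perm (Fin n), s σ * s σ = 1 := by
    intro σ; rcases Int.units_eq_one_or (Equiv.Perm.sign σ) with h | h <;> simp [hs, h]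
  set J : Equiv.Perm (Fin n) → Equiv.Perm (Fin n) → ℝ := fun σ τ =>
    ∫ u, ∏ i, (f (u i) * (u i (σ i) * u i (τ i))) ∂μⁿ with hJ
  have hJ_cont : ∀ σ τ : Equiv.Perm (Fin n),
      Continuous (fun u : Fin n → E' => ∏ i, (f (u i) * (u i (σ i) * u i (τ i)))) := by
    intro σ τ
    exact continuous_finset_prod _ fun i _ =>
      ((hf.comp (continuous_apply i)).mul
        (((EuclideanSpace.proj (σ i)).continuous.comp (continuous_apply i)).mul
          ((EuclideanSpace.proj (τ i)).continuous.comp (continuous_apply i))))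
  have hInJ : ∀ σ τ : Equiv.Perm (Fin n),
      Integrable (fun u : Fin n → E' => (s σ * s τ) *
        ∏ i, (f (u i) * (u i (σ i) * u i (τ i)))) μⁿ := fun σ τ =>
    (bb_integrable_pi ν hsph (hJ_cont σ τ)).const_mul _
  have hJ_fub : ∀ σ τ : Equiv.Perm (Fin n),
      J σ τ = ∏ i, ∫ v, f v * (v (σ i) * v (τ i)) ∂ν := by
    intro σ τ
    exact bb_integral_pi_prod ν n (fun i v => f v * (v (σ i) * v (τ i)))
  have hJ_inv : ∀ σ τ ρ : Equiv.Perm (Fin n), J (σ * ρ⁻¹) (τ * ρ⁻¹) = J σ τ := by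
    intro σ τ ρ
    have hper := bb_integral_pi_perm ν ρ
      (fun u : Fin n → E' => ∏ i, (f (u i) * (u i (σ i) * u i (τ i))))
    show (∫ u, ∏ i, (f (u i) * (u i ((σ * ρ⁻¹) i) * u i ((τ * ρ⁻¹) i))) ∂μⁿ)
      = ∫ u, ∏ i, (f (u i) * (u i (σ i) * u i (τ i))) ∂μⁿ
    rw [← hper]
    refine integral_congr_ae (Filter.Eventually.of_forall fun u => ?_)
    show (∏ i, (f (u i) * (u i ((σ * ρ⁻¹) i) * u i ((τ * ρ⁻¹) i))))
      = ∏ i, (f ((u ∘ ρ) i) * ((u ∘ ρ) i (σ i) * (u ∘ ρ) i (τ i)))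
    calc (∏ i, (f (u i) * (u i ((σ * ρ⁻¹) i) * u i ((τ * ρ⁻¹) i))))
        = ∏ j, (fun j => f (u j) * (u j (σ (ρ⁻¹ j)) * u j (τ (ρ⁻¹ j)))) j := by
          refine Finset.prod_congr rfl fun j _ => ?_
          simp [Equiv.Perm.mul_apply]
      _ = ∏ i, (fun j => f (u j) * (u j (σ (ρ⁻¹ j)) * u j (τ (ρ⁻¹ j)))) (ρ i) :=
          (Equiv.prod_comp ρ _).symm
      _ = ∏ i, (f ((u ∘ ρ) i) * ((u ∘ ρ) i (σ i) * (u ∘ ρ) i (τ i))) := by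
          refine Finset.prod_congr rfl fun i _ => ?_
          have hi : ρ⁻¹ (ρ i) = i := by rw [Equiv.Perm.inv_def, Equiv.symm_apply_apply]
          dsimp only [Function.comp_apply]
          rw [hi]
  have hdet : (Matrix.of fun i j : Fin n => ∫ v, f v * (v i * v j) ∂ν).det
      = ∑ σ : Equiv.Perm (Fin n), s σ * J σ 1 := by
    rw [Matrix.det_apply']
    refine Finset.sum_congr rfl fun σ _ => ?_
    congr 1
    rw [hJ_fub σ 1]
    refine Finset.prod_congr rfl fun i _ => ?_
    simp
  have hexp : ∀ u : Fin n → E', (∏ i, f (u i)) * (bbD u) ^ 2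
      = ∑ σ : Equiv.Perm (Fin n), ∑ τ : Equiv.Perm (Fin n),
          (s σ * s τ) * ∏ i, (f (u i) * (u i (σ i) * u i (τ i))) := by
    intro u
    rw [bbD_expand, pow_two, Finset.sum_mul_sum, Finset.mul_sum]
    refine Finset.sum_congr rfl fun σ _ => ?_
    rw [Finset.mul_sum]
    refine Finset.sum_congr rfl fun τ _ => ?_
    simp only [Finset.prod_mul_distrib]
    ring
  have hint : (∫ u, (∏ i, f (u i)) * (bbD u) ^ 2 ∂μⁿ)
      = ∑ σ : Equiv.Perm (Fin n), ∑ τ : Equiv.Perm (Fin n), (s σ * s τ) * J σ τ := by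
    rw [integral_congr_ae (Filter.Eventually.of_forall hexp)]
    rw [integral_finset_sum _
      (fun σ _ => integrable_finset_sum _ (fun τ _ => hInJ σ τ))]
    refine Finset.sum_congr rfl fun σ _ => ?_
    rw [integral_finset_sum _ (fun τ _ => hInJ σ τ)]
    refine Finset.sum_congr rfl fun τ _ => ?_
    rw [integral_const_mul]
  have hre : (∑ σ : Equiv.Perm (Fin n), ∑ τ : Equiv.Perm (Fin n), (s σ * s τ) * J σ τ)
      = (n.factorial : ℝ) * ∑ σ : Equiv.Perm (Fin n), s σ * J σ 1 := by
    have h1 : ∀ τ σ : Equiv.Perm (Fin n),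
        (s σ * s τ) * J σ τ = s (σ * τ⁻¹) * J (σ * τ⁻¹) 1 := by
      intro τ σ
      have e1 : J (σ * τ⁻¹) (τ * τ⁻¹) = J σ τ := hJ_inv σ τ τ
      rw [mul_inv_cancel] at e1
      rw [e1, hs_mul, hs_inv]
    rw [Finset.sum_comm]
    have h2 : ∀ τ : Equiv.Perm (Fin n),
        (∑ σ : Equiv.Perm (Fin n), (s σ * s τ) * J σ τ)
          = ∑ σ : Equiv.Perm (Fin n), s σ * J σ 1 := by
      intro τ
      rw [Finset.sum_congr rfl fun σ _ => h1 τ σ]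
      exact Fintype.sum_equiv (Equiv.mulRight τ⁻¹) _ _ (fun σ => rfl)
    rw [Finset.sum_congr rfl fun τ _ => h2 τ, Finset.sum_const, Finset.card_univ,
      Fintype.card_perm, Fintype.card_fin, nsmul_eq_mul]
  rw [hdet, hint, hre, inv_mul_cancel_left₀ (by positivity : (n.factorial : ℝ) ≠ 0)]

end BB3
section BB4

open MeasureTheory

theorem bb_card_fiber {n : ℕ} (k i : Fin n) :
    (Finset.univ.filter fun σ : Equiv.Perm (Fin n) => σ k = i).card
      = (n - 1).factorial := by
  classical
  have hcongr : ∀ i' : Fin n,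
      (Finset.univ.filter fun σ : Equiv.Perm (Fin n) => σ k = i').card
        = (Finset.univ.filter fun σ : Equiv.Perm (Fin n) => σ k = i).card := by
    intro i'
    refine Finset.card_bij' (fun σ _ => Equiv.swap i' i * σ)
      (fun σ _ => Equiv.swap i' i * σ) ?_ ?_ ?_ ?_
    · intro σ hσ
      simp only [Finset.mem_filter, Finset.mem_univ, true_and] at hσ ⊢
      rw [Equiv.Perm.mul_apply, hσ, Equiv.swap_apply_left]
    · intro σ hσ
      simp only [Finset.mem_filter, Finset.mem_univ, true_and] at hσ ⊢
      rw [Equiv.Perm.mul_apply, hσ, Equiv.swap_apply_right]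
    · intro σ _
      show Equiv.swap i' i * (Equiv.swap i' i * σ) = σ
      rw [← mul_assoc, Equiv.swap_mul_self, one_mul]
    · intro σ _
      show Equiv.swap i' i * (Equiv.swap i' i * σ) = σ
      rw [← mul_assoc, Equiv.swap_mul_self, one_mul]
  have hsum : ∑ i' : Fin n,
      (Finset.univ.filter fun σ : Equiv.Perm (Fin n) => σ k = i').card
        = n.factorial := by
    rw [← Finset.card_eq_sum_card_fiberwise
      (fun (σ : Equiv.Perm (Fin n)) (_ : σ ∈ Finset.univ) => Finset.mem_univ (σ k))]
    rw [Finset.card_univ, Fintype.card_perm, Fintype.card_fin]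
  rw [Finset.sum_congr rfl (fun i' _ => hcongr i'), Finset.sum_const,
    Finset.card_univ, Fintype.card_fin, smul_eq_mul] at hsum
  have hn : 0 < n := k.pos
  have h2 := Nat.mul_factorial_pred hn.ne'
  exact Nat.eq_of_mul_eq_mul_left hn (hsum.trans h2.symm)

variable {n : ℕ} (ν : Measure (EuclideanSpace ℝ (Fin n))) [IsFiniteMeasure ν]

local notation "E'" => EuclideanSpace ℝ (Fin n)
local notation "μⁿ" => (Measure.pi fun _ : Fin n => ν)

theorem bb_marg (hsph : ν (Metric.sphere (0 : E') 1)ᶜ = 0)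
    (hiso : ∀ x : E', ∫ v, (inner ℝ x v : ℝ) ^ 2 ∂ν = ‖x‖ ^ 2)
    {f : E' → ℝ} (hf : Continuous f) (k : Fin n) :
    ∫ u, f (u k) * (bbD u) ^ 2 ∂μⁿ = ((n - 1).factorial : ℝ) * ∫ v, f v ∂ν := by
  classical
  set s : Equiv.Perm (Fin n) → ℝ := fun σ => ((Equiv.Perm.sign σ : ℤ) : ℝ) with hs
  have hs_sq : ∀ σ : Equiv.Perm (Fin n), s σ * s σ = 1 := by
    intro σ; rcases Int.units_eq_one_or (Equiv.Perm.sign σ) with h | h <;> simp [hs, h]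
  set g : Equiv.Perm (Fin n) → Equiv.Perm (Fin n) → Fin n → E' → ℝ := fun σ τ i v =>
    (if i = k then f v else 1) * (v (σ i) * v (τ i)) with hg
  have hg_cont : ∀ σ τ i, Continuous (g σ τ i) := by
    intro σ τ i
    rcases eq_or_ne i k with rfl | hik
    · simp only [hg, if_pos rfl]
      exact hf.mul (((EuclideanSpace.proj (σ i)).continuous).mul
        ((EuclideanSpace.proj (τ i)).continuous))
    · simp only [hg, if_neg hik]
      exact (continuous_const).mul (((EuclideanSpace.proj (σ i)).continuous).mul
        ((EuclideanSpace.proj (τ i)).continuous))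
  have hint_moment : ∀ a b : Fin n, a ≠ b → ∫ v, v a * v b ∂ν = 0 := by
    intro a b hab
    rw [bb_moment ν hsph hiso a b, if_neg hab]
  have hmom1 : ∀ a : Fin n, ∫ v, v a * v a ∂ν = 1 := by
    intro a
    rw [bb_moment ν hsph hiso a a, if_pos rfl]
  have hexp : ∀ u : Fin n → E', f (u k) * (bbD u) ^ 2
      = ∑ σ : Equiv.Perm (Fin n), ∑ τ : Equiv.Perm (Fin n),
          (s σ * s τ) * ∏ i, g σ τ i (u i) := by
    intro u
    rw [bbD_expand, pow_two, Finset.sum_mul_sum, Finset.mul_sum]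
    refine Finset.sum_congr rfl fun σ _ => ?_
    rw [Finset.mul_sum]
    refine Finset.sum_congr rfl fun τ _ => ?_
    have : (∏ i, g σ τ i (u i))
        = (∏ i, (if i = k then f (u i) else 1)) * ((∏ i, u i (σ i)) * ∏ i, u i (τ i)) := by
      rw [hg, ← Finset.prod_mul_distrib, ← Finset.prod_mul_distrib]
    rw [this, Finset.prod_ite_eq' Finset.univ k (fun i => f (u i)),
      if_pos (Finset.mem_univ k)]
    ring
  have hIg : ∀ σ τ : Equiv.Perm (Fin n),
      Integrable (fun u : Fin n → E' => (s σ * s τ) * ∏ i, g σ τ i (u i)) μⁿ := by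
    intro σ τ
    exact (bb_integrable_pi ν hsph
      (continuous_finset_prod _ fun i _ => (hg_cont σ τ i).comp (continuous_apply i))).const_mul _
  have hT : ∀ σ τ : Equiv.Perm (Fin n),
      (∫ u, ∏ i, g σ τ i (u i) ∂μⁿ) = ∏ i, ∫ v, g σ τ i v ∂ν :=
    fun σ τ => bb_integral_pi_prod ν n (fun i v => g σ τ i v)
  have hoff : ∀ σ τ : Equiv.Perm (Fin n), σ ≠ τ → (∏ i, ∫ v, g σ τ i v ∂ν) = 0 := by
    intro σ τ hne
    have : ∃ j, j ≠ k ∧ σ j ≠ τ j := by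
      by_contra hcon
      push_neg at hcon
      exact hne (bb_perm_eq_of_agree hcon)
    obtain ⟨j, hjk, hj⟩ := this
    refine Finset.prod_eq_zero (Finset.mem_univ j) ?_
    rw [hg]
    simp only [if_neg hjk, one_mul]
    exact hint_moment _ _ hj
  have hdiag : ∀ σ : Equiv.Perm (Fin n),
      (∏ i, ∫ v, g σ σ i v ∂ν) = ∫ v, f v * (v (σ k) * v (σ k)) ∂ν := by
    intro σ
    refine Finset.prod_eq_single k ?_ (fun h => absurd (Finset.mem_univ k) h) |>.trans ?_
    · intro i _ hik
      rw [hg]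
      simp only [if_neg hik, one_mul]
      exact hmom1 _
    · rw [hg]
      simp
  have step1 : ∫ u, f (u k) * (bbD u) ^ 2 ∂μⁿ
      = ∑ σ : Equiv.Perm (Fin n), ∫ v, f v * (v (σ k) * v (σ k)) ∂ν := by
    rw [integral_congr_ae (Filter.Eventually.of_forall hexp),
      integral_finset_sum _ (fun σ _ => integrable_finset_sum _ (fun τ _ => hIg σ τ))]
    refine Finset.sum_congr rfl fun σ _ => ?_
    rw [integral_finset_sum _ (fun τ _ => hIg σ τ)]
    rw [Finset.sum_eq_single σ]
    · rw [integral_const_mul, hT σ σ, hdiag σ, hs_sq σ, one_mul]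
    · intro τ _ hτ
      rw [integral_const_mul, hT σ τ, hoff σ τ (Ne.symm hτ), mul_zero]
    · intro h
      exact absurd (Finset.mem_univ σ) h
  rw [step1]
  have step2 : ∑ σ : Equiv.Perm (Fin n), ∫ v, f v * (v (σ k) * v (σ k)) ∂ν
      = ∑ i : Fin n, ((n - 1).factorial : ℝ) * ∫ v, f v * (v i * v i) ∂ν := by
    rw [← Finset.sum_fiberwise Finset.univ (fun σ : Equiv.Perm (Fin n) => σ k)
      (fun σ => ∫ v, f v * (v (σ k) * v (σ k)) ∂ν)]
    refine Finset.sum_congr rfl fun i _ => ?_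
    rw [Finset.sum_congr rfl (fun σ hσ => ?_), Finset.sum_const, bb_card_fiber k i,
      nsmul_eq_mul]
    rw [Finset.mem_filter] at hσ
    rw [hσ.2]
  rw [step2, ← Finset.mul_sum]
  congr 1
  have hIfv : ∀ i : Fin n, Integrable (fun v : E' => f v * (v i * v i)) ν := by
    intro i
    exact bb_integrable ν hsph (hf.mul (((EuclideanSpace.proj i).continuous).mul
      ((EuclideanSpace.proj i).continuous)))
  rw [← integral_finset_sum _ (fun i _ => hIfv i)]
  refine integral_congr_ae ?_
  filter_upwards [bb_ae_sphere ν hsph] with v hv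
  have hsum : ∑ i, v i * v i = 1 := by
    have h1 : ‖v‖ ^ 2 = ∑ i, v i ^ 2 := by
      rw [EuclideanSpace.norm_eq, Real.sq_sqrt (by positivity)]
      refine Finset.sum_congr rfl fun i _ => ?_
      rw [Real.norm_eq_abs, sq_abs]
    have := h1.symm.trans (by rw [hv, one_pow])
    calc ∑ i, v i * v i = ∑ i, v i ^ 2 := by
          refine Finset.sum_congr rfl fun i _ => (sq (v i)).symm ▸ by ring
      _ = 1 := this
  rw [← Finset.mul_sum, hsum, mul_one]

end BB4
section BB5

open MeasureTheory

/-- The support of a measure on `ℝ^n`. (aux copy for lemma statements) -/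
theorem bb_msupp_compl_open {n : ℕ} (ν : Measure (EuclideanSpace ℝ (Fin n))) :
    IsOpen {x : EuclideanSpace ℝ (Fin n) | ∃ r > (0 : ℝ), ν (Metric.ball x r) = 0} := by
  rw [Metric.isOpen_iff]
  rintro y ⟨r, hr, h0⟩
  refine ⟨r, hr, fun z hz => ⟨r - dist z y, by
    simp only [Metric.mem_ball] at hz
    linarith, ?_⟩⟩
  refine measure_mono_null (fun p hp => ?_) h0
  simp only [Metric.mem_ball] at hp ⊢
  have := dist_triangle p z y
  linarith

theorem bb_msupp_compl_null {n : ℕ} (ν : Measure (EuclideanSpace ℝ (Fin n))) :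
    ν {x : EuclideanSpace ℝ (Fin n) | ∀ r > (0 : ℝ), ν (Metric.ball x r) ≠ 0}ᶜ = 0 := by
  classical
  set S : Set (EuclideanSpace ℝ (Fin n)) :=
    {x | ∀ r > (0 : ℝ), ν (Metric.ball x r) ≠ 0}ᶜ with hS
  have hSdesc : ∀ x : S, ∃ r > (0 : ℝ), ν (Metric.ball (x : EuclideanSpace ℝ (Fin n)) r) = 0 := by
    rintro ⟨x, hx⟩
    simp only [hS, Set.mem_compl_iff, Set.mem_setOf_eq] at hx
    push_neg at hx
    exact hx
  choose r hr hr0 using hSdesc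
  obtain ⟨T, hTc, hTeq⟩ := TopologicalSpace.isOpen_iUnion_countable
    (fun x : S => Metric.ball (x : EuclideanSpace ℝ (Fin n)) (r x))
    (fun x => Metric.isOpen_ball)
  have hcover : S ⊆ ⋃ x ∈ T, Metric.ball (x : EuclideanSpace ℝ (Fin n)) (r x) := by
    rw [hTeq]
    intro x hx
    exact Set.mem_iUnion.mpr ⟨⟨x, hx⟩, Metric.mem_ball_self (hr ⟨x, hx⟩)⟩
  refine measure_mono_null hcover ?_
  exact (measure_biUnion_null_iff hTc).mpr fun x _ => hr0 x

end BB5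

/-- The support of a measure on `ℝ^n`. -/
def msupp {n : ℕ} (ν : Measure (EuclideanSpace ℝ (Fin n))) :
    Set (EuclideanSpace ℝ (Fin n)) :=
  {x | ∀ r > (0 : ℝ), ν (Metric.ball x r) ≠ 0}

section BB6

open MeasureTheory

theorem bb_msupp_closed {n : ℕ} (ν : Measure (EuclideanSpace ℝ (Fin n))) :
    IsClosed (msupp ν) := by
  rw [← isOpen_compl_iff]
  have : (msupp ν)ᶜ = {x : EuclideanSpace ℝ (Fin n) | ∃ r > (0 : ℝ), ν (Metric.ball x r) = 0} := by
    ext x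
    simp only [msupp, Set.mem_compl_iff, Set.mem_setOf_eq]
    push_neg
    rfl
  rw [this]
  exact bb_msupp_compl_open ν

end BB6

/-- Ball–Barthe lemma: For an isotropic measure `ν` on `S^{n-1}` and a
continuous `t : S^{n-1} → (0,∞)`,
`det ∫ t(v) v⊗v dν(v) ≥ exp ∫ log t(v) dν(v)`, with equality iff
`t(v₁)⋯t(vₙ)` is constant over linearly independent `v₁,…,vₙ ∈ supp ν`. -/
theorem ball_barthe (n : ℕ)
    (ν : Measure (EuclideanSpace ℝ (Fin n))) [IsFiniteMeasure ν]
    (hsph : ν (Metric.sphere (0 : EuclideanSpace ℝ (Fin n)) 1)ᶜ = 0)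
    (hiso : ∀ x : EuclideanSpace ℝ (Fin n),
      ∫ v, (inner ℝ x v : ℝ) ^ 2 ∂ν = ‖x‖ ^ 2)
    (t : EuclideanSpace ℝ (Fin n) → ℝ) (htc : Continuous t) (htpos : ∀ v, 0 < t v)
    (M : Matrix (Fin n) (Fin n) ℝ)
    (hM : ∀ i j, M i j = ∫ v, t v * (v i * v j) ∂ν) :
    Real.exp (∫ v, Real.log (t v) ∂ν) ≤ M.det ∧
      (M.det = Real.exp (∫ v, Real.log (t v) ∂ν) ↔
        ∀ v w : Fin n → EuclideanSpace ℝ (Fin n),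
          (∀ i, v i ∈ msupp ν) → (∀ i, w i ∈ msupp ν) →
          LinearIndependent ℝ v → LinearIndependent ℝ w →
          ∏ i, t (v i) = ∏ i, t (w i)) := by
  classical
  rcases Nat.eq_zero_or_pos n with hn0 | hn
  · -- degenerate case n = 0
    subst hn0
    have hν : ν = 0 := by
      have hsphere : (Metric.sphere (0 : EuclideanSpace ℝ (Fin 0)) 1) = ∅ := by
        ext x
        simp only [Metric.mem_sphere, Set.mem_empty_iff_false, iff_false]
        rw [Subsingleton.elim x 0]
        simp
      rw [hsphere, Set.compl_empty] at hsph
      exact Measure.measure_univ_eq_zero.mp hsph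
    subst hν
    constructor
    · simp [Matrix.det_isEmpty]
    · constructor
      · intro _ v w _ _ _ _
        simp
      · intro _
        simp [Matrix.det_isEmpty]
  · -- main case
    set μn := (Measure.pi fun _ : Fin n => ν) with hμn
    have hMof : M = Matrix.of fun i j : Fin n => ∫ v, t v * (v i * v j) ∂ν := by
      ext i j
      rw [Matrix.of_apply]
      exact hM i j
    have key1 : M.det = (n.factorial : ℝ)⁻¹ *
        ∫ u, (∏ i, t (u i)) * (bbD u) ^ 2 ∂μn := by
      rw [hMof]
      exact bb_det_formula ν hsph htc
    have hone : (Matrix.of fun i j : Fin n => ∫ v, (1 : ℝ) * (v i * v j) ∂ν)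
        = (1 : Matrix (Fin n) (Fin n) ℝ) := by
      ext i j
      rw [Matrix.of_apply]
      simp only [one_mul]
      rw [bb_moment ν hsph hiso i j]
      by_cases h : i = j <;> simp [h, Matrix.one_apply]
    have hfac_pos : (0 : ℝ) < (n.factorial : ℝ) := by positivity
    have htotal : ∫ u, (bbD u) ^ 2 ∂μn = (n.factorial : ℝ) := by
      have h := bb_det_formula ν hsph (continuous_const : Continuous fun _ : EuclideanSpace ℝ (Fin n) => (1 : ℝ))
      rw [hone, Matrix.det_one] at h
      have h2 : ∫ u, (∏ _i : Fin n, (1:ℝ)) * (bbD u) ^ 2 ∂μn = ∫ u, (bbD u) ^ 2 ∂μn := by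
        refine integral_congr_ae (Filter.Eventually.of_forall fun u => ?_)
        simp
      rw [h2] at h
      field_simp at h
      linarith
    -- the probability measure
    set w : (Fin n → EuclideanSpace ℝ (Fin n)) → NNReal :=
      fun u => Real.toNNReal ((n.factorial : ℝ)⁻¹ * (bbD u) ^ 2) with hw
    have hw_meas : Measurable w := by
      apply Measurable.real_toNNReal
      exact (continuous_const.mul ((bbD_continuous (n := n)).pow 2)).measurable
    have hw_coe : ∀ u, (w u : ℝ) = (n.factorial : ℝ)⁻¹ * (bbD u) ^ 2 := fun u =>
      Real.coe_toNNReal _ (by positivity)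
    set μ := μn.withDensity (fun u => (w u : ENNReal)) with hμ
    have hint_w : ∀ {G : (Fin n → EuclideanSpace ℝ (Fin n)) → ℝ}, Continuous G → Integrable G μ := by
      intro G hG
      rw [hμ, integrable_withDensity_iff_integrable_smul hw_meas]
      have heq : (fun u => w u • G u) = fun u => ((n.factorial : ℝ)⁻¹ * (bbD u) ^ 2) * G u := by
        funext u
        show w u • G u = ((n.factorial : ℝ)⁻¹ * (bbD u) ^ 2) * G u
        rw [NNReal.smul_def, smul_eq_mul, hw_coe]
      rw [heq]
      exact bb_integrable_pi ν hsph ((continuous_const.mul ((bbD_continuous (n := n)).pow 2)).mul hG)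
    have hint_formula : ∀ {G : (Fin n → EuclideanSpace ℝ (Fin n)) → ℝ}, Continuous G →
        ∫ u, G u ∂μ = ∫ u, ((n.factorial : ℝ)⁻¹ * (bbD u) ^ 2) * G u ∂μn := by
      intro G hG
      rw [hμ, integral_withDensity_eq_integral_smul hw_meas]
      refine integral_congr_ae (Filter.Eventually.of_forall fun u => ?_)
      show w u • G u = ((n.factorial : ℝ)⁻¹ * (bbD u) ^ 2) * G u
      rw [NNReal.smul_def, smul_eq_mul, hw_coe]
    haveI hprob : IsProbabilityMeasure μ := by
      constructor
      rw [hμ, withDensity_apply _ MeasurableSet.univ, setLIntegral_univ]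
      have hi : Integrable (fun u => (n.factorial : ℝ)⁻¹ * (bbD u) ^ 2) μn :=
        bb_integrable_pi ν hsph (continuous_const.mul ((bbD_continuous (n := n)).pow 2))
      have hofr := ofReal_integral_eq_lintegral_ofReal hi
        (Filter.Eventually.of_forall fun u => by positivity)
      have hval : ∫ u, (n.factorial : ℝ)⁻¹ * (bbD u) ^ 2 ∂μn = 1 := by
        rw [integral_const_mul, htotal]
        field_simp
      rw [hval] at hofr
      have : ∀ u, (w u : ENNReal) = ENNReal.ofReal ((n.factorial : ℝ)⁻¹ * (bbD u) ^ 2) :=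
        fun u => rfl
      simp only [this]
      rw [← hofr, ENNReal.ofReal_one]
    -- F and exp F
    set F : (Fin n → EuclideanSpace ℝ (Fin n)) → ℝ := fun u => ∑ i, Real.log (t (u i)) with hF
    have hlog_cont : Continuous fun v : EuclideanSpace ℝ (Fin n) => Real.log (t v) :=
      htc.log fun v => (htpos v).ne'
    have hF_cont : Continuous F :=
      continuous_finset_sum _ fun i _ => hlog_cont.comp (continuous_apply i)
    have hexpF : ∀ u, Real.exp (F u) = ∏ i, t (u i) := by
      intro u
      rw [hF, Real.exp_sum]
      exact Finset.prod_congr rfl fun i _ => Real.exp_log (htpos _)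
    have hPt_cont : Continuous fun u : Fin n → EuclideanSpace ℝ (Fin n) => ∏ i, t (u i) :=
      continuous_finset_prod _ fun i _ => htc.comp (continuous_apply i)
    have hdetM : M.det = ∫ u, ∏ i, t (u i) ∂μ := by
      rw [key1, hint_formula hPt_cont, ← integral_const_mul]
      refine integral_congr_ae (Filter.Eventually.of_forall fun u => ?_)
      ring
    have hFint : ∫ u, F u ∂μ = ∫ v, Real.log (t v) ∂ν := by
      rw [hint_formula hF_cont]
      have hIk : ∀ k : Fin n, Integrable
          (fun u : Fin n → EuclideanSpace ℝ (Fin n) => (n.factorial : ℝ)⁻¹ * (Real.log (t (u k)) * (bbD u) ^ 2)) μn :=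
        fun k => (bb_integrable_pi ν hsph
          ((hlog_cont.comp (continuous_apply k)).mul ((bbD_continuous (n := n)).pow 2))).const_mul _
      calc ∫ u, ((n.factorial : ℝ)⁻¹ * (bbD u) ^ 2) * F u ∂μn
          = ∫ u, ∑ k, (n.factorial : ℝ)⁻¹ * (Real.log (t (u k)) * (bbD u) ^ 2) ∂μn := by
            refine integral_congr_ae (Filter.Eventually.of_forall fun u => ?_)
            show (n.factorial : ℝ)⁻¹ * bbD u ^ 2 * F u
              = ∑ k, (n.factorial : ℝ)⁻¹ * (Real.log (t (u k)) * bbD u ^ 2)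
            rw [hF]
            dsimp only
            rw [Finset.mul_sum]
            refine Finset.sum_congr rfl fun k _ => ?_
            ring
        _ = ∑ k : Fin n, (n.factorial : ℝ)⁻¹ *
              ∫ u, Real.log (t (u k)) * (bbD u) ^ 2 ∂μn := by
            rw [integral_finset_sum _ fun k _ => hIk k]
            exact Finset.sum_congr rfl fun k _ => integral_const_mul _ _
        _ = ∑ _k : Fin n, (n.factorial : ℝ)⁻¹ *
              (((n - 1).factorial : ℝ) * ∫ v, Real.log (t v) ∂ν) := by
            exact Finset.sum_congr rfl fun k _ => by
              rw [bb_marg ν hsph hiso hlog_cont k]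
        _ = ∫ v, Real.log (t v) ∂ν := by
            rw [Finset.sum_const, Finset.card_univ, Fintype.card_fin, nsmul_eq_mul]
            have hnn : ((n : ℝ)) * ((n - 1).factorial : ℝ) = (n.factorial : ℝ) := by
              exact_mod_cast Nat.mul_factorial_pred hn.ne'
            calc (n : ℝ) * ((n.factorial : ℝ)⁻¹ *
                  (((n - 1).factorial : ℝ) * ∫ v, Real.log (t v) ∂ν))
                = ((n : ℝ) * ((n - 1).factorial : ℝ)) *
                  ((n.factorial : ℝ)⁻¹ * ∫ v, Real.log (t v) ∂ν) := by ring
              _ = (n.factorial : ℝ) *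
                  ((n.factorial : ℝ)⁻¹ * ∫ v, Real.log (t v) ∂ν) := by rw [hnn]
              _ = ∫ v, Real.log (t v) ∂ν := by
                  rw [← mul_assoc, mul_inv_cancel₀ hfac_pos.ne', one_mul]
    have hFi : Integrable F μ := hint_w hF_cont
    have hEi : Integrable (Real.exp ∘ F) μ := by
      have h1 : Integrable (fun u => ∏ i, t (u i)) μ := hint_w hPt_cont
      exact h1.congr (Filter.Eventually.of_forall fun u => (hexpF u).symm)
    have jensen := strictConvexOn_exp.ae_eq_const_or_map_average_lt
      Real.continuous_exp.continuousOn isClosed_univ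
      (Filter.Eventually.of_forall fun u => Set.mem_univ (F u)) hFi hEi
    rw [average_eq_integral, average_eq_integral] at jensen
    have hExpInt : ∫ u, Real.exp (F u) ∂μ = M.det := by
      rw [hdetM]
      exact integral_congr_ae (Filter.Eventually.of_forall fun u => hexpF u)
    have hineq : Real.exp (∫ v, Real.log (t v) ∂ν) ≤ M.det := by
      rw [← hFint, ← hExpInt]
      rcases jensen with hconst | hlt
      · have heqc : ∫ u, Real.exp (F u) ∂μ = Real.exp (∫ x, F x ∂μ) := by
          rw [integral_congr_ae (hconst.mono fun u hu => congrArg Real.exp hu)]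
          simp
        rw [heqc]
      · exact le_of_lt hlt
    refine ⟨hineq, ?_, ?_⟩
    · -- equality → constancy
      intro heq v' w' hv' hw' hliv hliw
      have hconst : F =ᵐ[μ] fun _ => ∫ x, F x ∂μ := by
        rcases jensen with h | hlt
        · exact h
        · exfalso
          have hEq2 : ∫ u, Real.exp (F u) ∂μ = Real.exp (∫ u, F u ∂μ) := by
            rw [hExpInt, heq, hFint]
          have hlt' : Real.exp (∫ u, F u ∂μ) < ∫ u, Real.exp (F u) ∂μ := hlt
          rw [hEq2] at hlt'
          exact lt_irrefl _ hlt'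
      have hptwise : ∀ u : Fin n → EuclideanSpace ℝ (Fin n), (∀ i, u i ∈ msupp ν) → bbD u ≠ 0 →
          F u = ∫ x, F x ∂μ := by
        intro u hu hD
        by_contra hne
        set A : Set (Fin n → EuclideanSpace ℝ (Fin n)) :=
          {x | F x ≠ ∫ x, F x ∂μ} ∩ {x | |bbD u| / 2 < |bbD x|} with hA
        have hopen : IsOpen A := by
          refine IsOpen.inter ?_ ?_
          · exact isOpen_compl_singleton.preimage hF_cont
          · exact (isOpen_Ioi).preimage (continuous_abs.comp (bbD_continuous (n := n)))
        have hmem : u ∈ A := ⟨hne, half_lt_self (abs_pos.mpr hD)⟩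
        obtain ⟨r, hr, hball⟩ := Metric.isOpen_iff.mp hopen u hmem
        have hμn_pos : μn (Metric.ball u r) ≠ 0 := by
          rw [ball_pi u hr, hμn, Measure.pi_pi]
          exact Finset.prod_ne_zero_iff.mpr fun i _ => hu i r hr
        have hμ_pos : μ (Metric.ball u r) ≠ 0 := by
          rw [hμ, withDensity_apply _ measurableSet_ball]
          intro hzero
          have hlb : ENNReal.ofReal ((n.factorial : ℝ)⁻¹ * (|bbD u| / 2) ^ 2)
              * μn (Metric.ball u r) ≤ ∫⁻ x in Metric.ball u r, (w x : ENNReal) ∂μn := by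
            rw [← setLIntegral_const (Metric.ball u r) _]
            refine setLIntegral_mono_ae (by fun_prop) ?_
            refine Filter.Eventually.of_forall (fun x hx => ?_)
            have hxa : |bbD u| / 2 < |bbD x| := (hball hx).2
            have : ((n.factorial : ℝ)⁻¹ * (|bbD u| / 2) ^ 2)
                ≤ (n.factorial : ℝ)⁻¹ * (bbD x) ^ 2 := by
              have h1 : (|bbD u| / 2) ^ 2 ≤ (bbD x) ^ 2 := by
                rw [← sq_abs (bbD x)]
                apply pow_le_pow_left₀ (by positivity) (le_of_lt hxa)
              apply mul_le_mul_of_nonneg_left h1 (by positivity)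
            calc ENNReal.ofReal ((n.factorial : ℝ)⁻¹ * (|bbD u| / 2) ^ 2)
                ≤ ENNReal.ofReal ((n.factorial : ℝ)⁻¹ * (bbD x) ^ 2) :=
                  ENNReal.ofReal_le_ofReal this
              _ = (w x : ENNReal) := rfl
          rw [hzero] at hlb
          have habs : 0 < |bbD u| := abs_pos.mpr hD
          have hc_pos : (0 : ENNReal)
              < ENNReal.ofReal ((n.factorial : ℝ)⁻¹ * (|bbD u| / 2) ^ 2) := by
            rw [ENNReal.ofReal_pos]
            positivity
          have hμn0 : μn (Metric.ball u r) = 0 := by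
            rcases mul_eq_zero.mp (le_antisymm hlb zero_le) with h | h
            · exact absurd h hc_pos.ne'
            · exact h
          exact hμn_pos hμn0
        have hnull : μ {x : Fin n → EuclideanSpace ℝ (Fin n) | ¬ F x = ∫ x, F x ∂μ} = 0 := ae_iff.mp hconst
        exact hμ_pos (measure_mono_null (fun x hx => (hball hx).1) hnull)
      have hDv : bbD v' ≠ 0 := (bbD_ne_zero_iff v').mpr hliv
      have hDw : bbD w' ≠ 0 := (bbD_ne_zero_iff w').mpr hliw
      have h1 := hptwise v' hv' hDv
      have h2 := hptwise w' hw' hDw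
      rw [← hexpF v', ← hexpF w', h1, h2]
    · -- constancy → equality
      intro hcc
      have hae_supp : ∀ᵐ u ∂μn, ∀ i, u i ∈ msupp ν :=
        bb_ae_pi_mem ν (bb_msupp_closed ν).measurableSet (bb_msupp_compl_null ν)
      have hex : ∃ u : Fin n → EuclideanSpace ℝ (Fin n), (∀ i, u i ∈ msupp ν) ∧ bbD u ≠ 0 := by
        by_contra hno
        push_neg at hno
        have hz : ∀ᵐ u ∂μn, (bbD u) ^ 2 = 0 := hae_supp.mono fun u hu => by
          rw [hno u hu]; ring
        have hzz : ∫ u, (bbD u) ^ 2 ∂μn = 0 := by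
          rw [integral_congr_ae hz]; simp
        rw [htotal] at hzz
        exact hfac_pos.ne' hzz
      obtain ⟨u₀, hu₀s, hu₀D⟩ := hex
      have hμ_supp : ∀ᵐ x ∂μ, ∀ i, x i ∈ msupp ν :=
        (withDensity_absolutelyContinuous μn _).ae_le hae_supp
      have hμ_D : ∀ᵐ x ∂μ, bbD x ≠ 0 := by
        rw [ae_iff]
        have hset : {x : Fin n → EuclideanSpace ℝ (Fin n) | ¬ bbD x ≠ 0} = bbD ⁻¹' {0} := by
          ext x; simp [not_not]
        have hms : MeasurableSet (bbD ⁻¹' ({0} : Set ℝ) : Set (Fin n → EuclideanSpace ℝ (Fin n))) :=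
          (bbD_continuous (n := n)).measurable (measurableSet_singleton 0)
        rw [hset, hμ, withDensity_apply _ hms]
        have : ∀ᵐ x ∂μn, x ∈ bbD ⁻¹' ({0} : Set ℝ) → (w x : ENNReal) = 0 := by
          refine Filter.Eventually.of_forall fun x hx => ?_
          have hx0 : bbD x = 0 := hx
          simp [hw, hx0]
        rw [setLIntegral_congr_fun_ae hms this]
        simp
      have hconst : F =ᵐ[μ] fun _ => F u₀ := by
        filter_upwards [hμ_supp, hμ_D] with x hs hD
        have hpp := hcc x u₀ hs hu₀s ((bbD_ne_zero_iff x).mp hD)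
          ((bbD_ne_zero_iff u₀).mp hu₀D)
        have e1 : F x = Real.log (∏ i, t (x i)) :=
          (Real.log_prod fun i _ => (htpos _).ne').symm
        have e2 : F u₀ = Real.log (∏ i, t (u₀ i)) :=
          (Real.log_prod fun i _ => (htpos _).ne').symm
        rw [e1, e2, hpp]
      have hc0 : ∫ x, F x ∂μ = F u₀ := by
        rw [integral_congr_ae hconst]; simp
      have hE0 : ∫ u, Real.exp (F u) ∂μ = Real.exp (F u₀) := by
        rw [integral_congr_ae (hconst.mono fun x hx => congrArg Real.exp hx)]
        simp
      rw [← hExpInt, ← hFint, hc0, hE0]
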